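/- arXiv:2506.08755 — 3 statements merged into one kernel-verified Lean document; each statement's English description precedes it below -/
import Mathlib

section
/- Being abelian is a profinite property: if Γ₁ and Γ₂ are residually finite groups with isomorphic profinite completions (as topological groups), then Γ₁ is abelian if and only if Γ₂ is abelian. -/
/-- The index set for the profinite completion: finite-index normal subgroups. -/
structure FinIndexNormal (Γ : Type*) [Group Γ] where
  N : Subgroup Γ
  normal : N.Normal
  finiteIndex : N.FiniteIndex

attribute [instance] FinIndexNormal.normal FinIndexNormal.finiteIndex

variable (Γ : Type*) [Group Γ]

instance (K : FinIndexNormal Γ) : TopologicalSpace (Γ ⧸ K.N) := ⊥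
instance (K : FinIndexNormal Γ) : DiscreteTopology (Γ ⧸ K.N) := ⟨rfl⟩
instance (K : FinIndexNormal Γ) : IsTopologicalGroup (Γ ⧸ K.N) where
  continuous_mul := continuous_of_discreteTopology
  continuous_inv := continuous_of_discreteTopology

/-- The profinite completion of `Γ`, as the subgroup of compatible families in the
product of all finite quotients of `Γ`. -/
def profiniteCompletionSubgroup : Subgroup (Π K : FinIndexNormal Γ, Γ ⧸ K.N) where
  carrier := {x | ∀ (K L : FinIndexNormal Γ) (h : K.N ≤ L.N),
    QuotientGroup.map K.N L.N (MonoidHom.id Γ) (by simpa using h) (x K) = x L}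
  one_mem' := by intro K L h; simp
  mul_mem' := by
    intro a b ha hb K L h
    simp only [Pi.mul_apply, map_mul, ha K L h, hb K L h]
  inv_mem' := by
    intro a ha K L h
    simp only [Pi.inv_apply, map_inv, ha K L h]

/-- The profinite completion, as a topological group. -/
abbrev ProfiniteCompletion := ↥(profiniteCompletionSubgroup Γ)

/-- The canonical map `ι : Γ → Γ̂`. -/
def toProfiniteCompletion : Γ →* ProfiniteCompletion Γ where
  toFun g := ⟨fun K => QuotientGroup.mk g, fun K L h => rfl⟩
  map_one' := rfl
  map_mul' _ _ := rfl

/-- A group is residually finite if every nontrivial element survives in some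
finite quotient. -/
def ResiduallyFinite : Prop :=
  ∀ g : Γ, g ≠ 1 → ∃ (Q : Type) (_ : Group Q) (_ : Finite Q) (φ : Γ →* Q), φ g ≠ 1


lemma toProfiniteCompletion_injective (h : ResiduallyFinite Γ) :
    Function.Injective (toProfiniteCompletion Γ) := by
  rw [← MonoidHom.ker_eq_bot_iff, eq_bot_iff]
  intro g hg
  by_contra hne
  obtain ⟨Q, _, _, φ, hφ⟩ := h g hne
  haveI : φ.ker.FiniteIndex := φ.ker.finiteIndex_of_finite_quotient
  set K : FinIndexNormal Γ := ⟨φ.ker, inferInstance, inferInstance⟩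
  have : (toProfiniteCompletion Γ g : Π K : FinIndexNormal Γ, Γ ⧸ K.N) K = 1 := by
    rw [hg]; rfl
  have hgk : (QuotientGroup.mk g : Γ ⧸ K.N) = 1 := this
  rw [QuotientGroup.eq_one_iff] at hgk
  exact hφ hgk

lemma profiniteCompletion_comm (h : ∀ a b : Γ, a * b = b * a)
    (x y : ProfiniteCompletion Γ) : x * y = y * x := by
  haveI : CommGroup Γ := { mul_comm := h }
  ext K
  show (x : Π K : FinIndexNormal Γ, Γ ⧸ K.N) K * y.1 K = y.1 K * x.1 K
  induction (x.1 K) using QuotientGroup.induction_on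
  induction (y.1 K) using QuotientGroup.induction_on
  rw [← QuotientGroup.mk_mul, ← QuotientGroup.mk_mul]
  exact congrArg _ (h _ _)

lemma abelian_of_completion_comm (h : ResiduallyFinite Γ)
    (hc : ∀ x y : ProfiniteCompletion Γ, x * y = y * x) :
    ∀ a b : Γ, a * b = b * a := by
  intro a b
  apply toProfiniteCompletion_injective Γ h
  simp only [map_mul]
  exact hc _ _

theorem abelian_is_profinite_property (Γ₁ Γ₂ : Type*) [Group Γ₁] [Group Γ₂]
    (h₁ : ResiduallyFinite Γ₁) (h₂ : ResiduallyFinite Γ₂)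
    (e : ProfiniteCompletion Γ₁ ≃* ProfiniteCompletion Γ₂)
    (he : Continuous e) (he' : Continuous e.symm) :
    (∀ a b : Γ₁, a * b = b * a) ↔ (∀ a b : Γ₂, a * b = b * a) := by
  constructor
  · intro h
    apply abelian_of_completion_comm Γ₂ h₂
    intro x y
    have := profiniteCompletion_comm Γ₁ h (e.symm x) (e.symm y)
    have := congrArg e this
    simpa using this
  · intro h
    apply abelian_of_completion_comm Γ₁ h₁
    intro x y
    have := profiniteCompletion_comm Γ₂ h (e x) (e y)
    have := congrArg e.symm this
    simpa using this
end

section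
/- For every prime p, the quaternary quadratic form ⟨1,1,1,1⟩ (x₁² + x₂² + x₃² + x₄²) is isometric over the p-adic integers ℤ_p to the form ⟨−1,−1,−1,−1⟩ (−x₁² − x₂² − x₃² − x₄²). -/
open Polynomial

lemma toZMod_zero_iff {p : ℕ} [Fact p.Prime] (z : ℤ_[p]) :
    PadicInt.toZMod z = 0 ↔ ¬ IsUnit z := by
  rw [← RingHom.mem_ker, PadicInt.ker_toZMod, IsLocalRing.mem_maximalIdeal, mem_nonunits_iff]

lemma exists_four_sq (p : ℕ) [Fact p.Prime] :
    ∃ a b c d : ℤ_[p], a ^ 2 + b ^ 2 + c ^ 2 + d ^ 2 = -1 := by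
  by_cases hp2 : p = 2
  · subst hp2
    have hnorm : ‖(X ^ 2 + C 7 : Polynomial ℤ_[2]).eval 1‖
        < ‖(X ^ 2 + C 7 : Polynomial ℤ_[2]).derivative.eval 1‖ ^ 2 := by
      have h8 : ((X ^ 2 + C 7 : Polynomial ℤ_[2]).eval 1) = (2:ℤ_[2])^3 := by
        simp; norm_num
      have hd : ((X ^ 2 + C 7 : Polynomial ℤ_[2]).derivative.eval 1) = (2:ℤ_[2]) := by
        simp; norm_num
      have h2 : ‖(2:ℤ_[2])‖ = (2:ℝ)⁻¹ := by
        have := PadicInt.norm_p (p := 2)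
        simpa using this
      rw [h8, hd, norm_pow, h2]
      norm_num
    obtain ⟨z, hz, -⟩ := hensels_lemma hnorm
    refine ⟨1, 1, 2, z, ?_⟩
    have : z ^ 2 + 7 = 0 := by simpa using hz
    linear_combination this
  · obtain ⟨u, v, huv⟩ := ZMod.sq_add_sq p (-1)
    -- wlog u ≠ 0
    obtain ⟨u, v, huv, hu⟩ : ∃ u v : ZMod p, u ^ 2 + v ^ 2 = -1 ∧ u ≠ 0 := by
      by_cases h : u = 0
      · refine ⟨v, u, by linear_combination huv, ?_⟩
        intro hv
        rw [h, hv] at huv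
        simp at huv
      · exact ⟨u, v, huv, h⟩
    set x : ℤ_[p] := (u.val : ℤ_[p]) with hx
    set y : ℤ_[p] := (v.val : ℤ_[p]) with hy
    have htx : PadicInt.toZMod x = u := by
      simp [hx, ZMod.natCast_val, ZMod.cast_id]
    have hty : PadicInt.toZMod y = v := by
      simp [hy, ZMod.natCast_val, ZMod.cast_id]
    have hux : IsUnit x := by
      by_contra h
      exact hu (htx ▸ (toZMod_zero_iff x).mpr h)
    have hu2 : IsUnit (2 : ℤ_[p]) := by
      by_contra h
      have := (toZMod_zero_iff (2:ℤ_[p])).mpr h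
      rw [show ((2:ℤ_[p])) = ((2:ℕ):ℤ_[p]) by norm_num, map_natCast,
        ZMod.natCast_eq_zero_iff] at this
      exact hp2 ((Nat.prime_dvd_prime_iff_eq (Fact.out) Nat.prime_two).mp this)
    have hnorm : ‖(X ^ 2 + C (y ^ 2 + 1) : Polynomial ℤ_[p]).eval x‖
        < ‖(X ^ 2 + C (y ^ 2 + 1) : Polynomial ℤ_[p]).derivative.eval x‖ ^ 2 := by
      have hev : (X ^ 2 + C (y ^ 2 + 1) : Polynomial ℤ_[p]).eval x = x ^ 2 + y ^ 2 + 1 := by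
        simp; ring
      have hdv : (X ^ 2 + C (y ^ 2 + 1) : Polynomial ℤ_[p]).derivative.eval x = 2 * x := by
        simp [Polynomial.derivative_pow]
      have h1 : ‖(2 * x : ℤ_[p])‖ = 1 := PadicInt.isUnit_iff.mp (hu2.mul hux)
      have h2 : ‖x ^ 2 + y ^ 2 + 1‖ < 1 := by
        rw [PadicInt.norm_lt_one_iff_dvd, ← Ideal.mem_span_singleton,
          ← PadicInt.maximalIdeal_eq_span_p, ← PadicInt.ker_toZMod, RingHom.mem_ker]
        simp [htx, hty]
        linear_combination huv
      rw [hev, hdv, h1]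
      simpa using h2
    obtain ⟨z, hz, -⟩ := hensels_lemma hnorm
    refine ⟨z, y, 0, 0, ?_⟩
    have : z ^ 2 + (y ^ 2 + 1) = 0 := by simpa using hz
    linear_combination this


lemma quat_matrix {R : Type*} [CommRing R] (a b c d : R)
    (h : a ^ 2 + b ^ 2 + c ^ 2 + d ^ 2 = -1) :
    ∃ M : Matrix (Fin 4) (Fin 4) R, IsUnit M ∧ M.transpose * M = -1 := by
  refine ⟨!![a,b,c,d; -b,a,-d,c; -c,d,a,-b; -d,-c,b,a], ?_, ?_⟩
  all_goals
    have ht : (!![a,b,c,d; -b,a,-d,c; -c,d,a,-b; -d,-c,b,a] : Matrix (Fin 4) (Fin 4) R).transpose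
        = !![a,-b,-c,-d; b,a,d,-c; c,-d,a,b; d,c,-b,a] := by
      ext i j; fin_cases i <;> fin_cases j <;> rfl
  · rw [Matrix.isUnit_iff_isUnit_det]
    have h2 : (!![a,b,c,d; -b,a,-d,c; -c,d,a,-b; -d,-c,b,a] : Matrix (Fin 4) (Fin 4) R).transpose
        * !![a,b,c,d; -b,a,-d,c; -c,d,a,-b; -d,-c,b,a] = -1 := by
      rw [ht]
      ext i j
      fin_cases i <;> fin_cases j <;>
        simp [Matrix.mul_apply, Fin.sum_univ_four, Matrix.neg_apply, Matrix.one_apply] <;>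
          first
        | linear_combination h
        | linear_combination -h
        | ring
    have := congrArg Matrix.det h2
    rw [Matrix.det_mul, Matrix.det_transpose] at this
    have h1 : ((-1 : Matrix (Fin 4) (Fin 4) R)).det = 1 := by
      simp [Matrix.det_neg]
      norm_num
    rw [h1] at this
    exact IsUnit.of_mul_eq_one _ this
  · rw [ht]
    ext i j
    fin_cases i <;> fin_cases j <;>
      simp [Matrix.mul_apply, Fin.sum_univ_four, Matrix.neg_apply, Matrix.one_apply] <;>
        first
        | linear_combination h
        | linear_combination -h
        | ring


/-- For every prime `p`, the quadratic forms `⟨1,1,1,1⟩` and `⟨-1,-1,-1,-1⟩` are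
isometric over `ℤ_p`: there is an invertible `4 × 4` matrix `M` over `ℤ_p` with
`Mᵀ * M = -1`, so that `-(M v)ᵀ (M v) = vᵀ v` for all `v`. -/
theorem quadform_one_isometric_neg_one (p : ℕ) [Fact p.Prime] :
    ∃ M : Matrix (Fin 4) (Fin 4) ℤ_[p], IsUnit M ∧ M.transpose * M = -1 := by
  obtain ⟨a, b, c, d, h⟩ := exists_four_sq p
  exact quat_matrix a b c d h
end

section
/- Let G be a finite group acting transitively on a finite set X, with point stabilizer H, and suppose some g ∈ G acts on X with cycle type (1,2,2,…,2) (one fixed point and all other cycles of length 2). Then every subgroup of G that is almost conjugate to H is conjugate to H. -/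
open MulAction

/-- Parity of the cardinality of the fixed points of an involution. -/
private lemma involutive_card_modEq {F : Type*} [Finite F] {ι : F → F}
    (hι : Function.Involutive ι) :
    Nat.card F ≡ Nat.card {z : F // ι z = z} [MOD 2] := by
  classical
  let σ : Equiv.Perm F := hι.toPerm
  have hσ2 : σ * σ = 1 := by
    ext z
    exact hι z
  let P : Subgroup (Equiv.Perm F) := Subgroup.zpowers σ
  have hP : IsPGroup 2 P := by
    rintro ⟨x, hx⟩
    refine ⟨1, ?_⟩
    obtain ⟨k, hk⟩ := Subgroup.mem_zpowers_iff.mp hx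
    have hx2 : x ^ (2:ℕ) = 1 := by
      subst hk
      have h2 : (σ ^ k) ^ (2 : ℕ) = (σ ^ (2:ℕ)) ^ k := by
        rw [← zpow_natCast, ← zpow_mul, mul_comm, zpow_mul, zpow_natCast]
      rw [h2, pow_two, hσ2, one_zpow]
    refine Subtype.ext ?_
    rw [pow_one]
    rw [SubgroupClass.coe_pow]
    exact hx2
  have key := hP.card_modEq_card_fixedPoints F
  have e : (fixedPoints P F) ≃ {z : F // ι z = z} := by
    refine Equiv.subtypeEquivRight fun z => ?_
    constructor
    · intro hz
      have := hz ⟨σ, Subgroup.mem_zpowers σ⟩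
      exact this
    · intro hz p
      obtain ⟨k, hk⟩ := Subgroup.mem_zpowers_iff.mp p.2
      have : Function.IsFixedPt σ z := hz
      have := this.perm_zpow k
      show (p : Equiv.Perm F) z = z
      rw [← hk]
      exact this
  calc Nat.card F ≡ Nat.card (fixedPoints P F) [MOD 2] := key
    _ = Nat.card {z : F // ι z = z} := Nat.card_congr e

private lemma fix_comp_odd_iff {W : Type*} [Finite W] (σ σ' : W → W)
    (hσ : ∀ w, σ (σ w) = w) (hσ' : ∀ w, σ' (σ' w) = w) (w₀ w₁ : W)
    (h₀ : ∀ w, σ w = w ↔ w = w₀) (h₁ : ∀ w, σ' w = w ↔ w = w₁) :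
    Odd (Nat.card {w : W // σ (σ' w) = w}) ↔ w₀ = w₁ := by
  classical
  have hagree : ∀ w : W, σ (σ' w) = w → σ' w = σ w := by
    intro w h
    have h2 := congrArg σ h
    rwa [hσ (σ' w)] at h2
  have hmem : ∀ w : W, σ (σ' w) = w → σ (σ' (σ w)) = σ w := by
    intro w h
    rw [← hagree w h, hσ' w]
    exact (hagree w h).symm
  let ι : {w : W // σ (σ' w) = w} → {w : W // σ (σ' w) = w} :=
    fun z => ⟨σ z.1, hmem z.1 z.2⟩
  have hinv : Function.Involutive ι := fun z => Subtype.ext (hσ z.1)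
  have key := involutive_card_modEq hinv
  constructor
  · intro hodd
    by_contra hne
    have hempty : IsEmpty {z : {w : W // σ (σ' w) = w} // ι z = z} := by
      refine ⟨fun z => hne ?_⟩
      have hz : σ z.1.1 = z.1.1 := congrArg Subtype.val z.2
      have hw0 : z.1.1 = w₀ := (h₀ _).mp hz
      have ha := hagree z.1.1 z.1.2
      rw [hw0] at ha hz
      exact (h₁ w₀).mp (ha.trans hz)
    haveI := hempty
    have h0 : Nat.card {z : {w : W // σ (σ' w) = w} // ι z = z} = 0 := Nat.card_of_isEmpty
    rw [h0] at key
    rw [Nat.odd_iff] at hodd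
    rw [Nat.ModEq] at key
    omega
  · intro heq
    subst heq
    have hw0F : σ (σ' w₀) = w₀ := by
      rw [(h₁ w₀).mpr rfl]
      exact (h₀ w₀).mpr rfl
    have hone : Nat.card {z : {w : W // σ (σ' w) = w} // ι z = z} = 1 := by
      rw [Nat.card_eq_one_iff_unique]
      constructor
      · refine ⟨fun z z' => ?_⟩
        have hz : z.1.1 = w₀ := (h₀ _).mp (congrArg Subtype.val z.2)
        have hz' : z'.1.1 = w₀ := (h₀ _).mp (congrArg Subtype.val z'.2)
        exact Subtype.ext (Subtype.ext (hz.trans hz'.symm))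
      · exact ⟨⟨⟨w₀, hw0F⟩, Subtype.ext ((h₀ w₀).mpr rfl)⟩⟩
    rw [hone] at key
    rw [Nat.odd_iff]
    rw [Nat.ModEq] at key
    omega

private lemma card_fix_mul {G : Type*} [Group G] [Finite G] {W : Type*} [MulAction G W]
    [Finite W] [MulAction.IsPretransitive G W] (w₀ : W) (a : G) :
    Nat.card {w : W // a • w = w} * Nat.card (MulAction.stabilizer G w₀) =
      Nat.card {x : G // x ∈ MulAction.stabilizer G w₀ ∧ ConjClasses.mk x = ConjClasses.mk a} *
        Nat.card {z : G // a * z = z * a} := by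
  classical
  have hβex : ∀ w : W, ∃ b : G, b • w₀ = w := fun w => MulAction.exists_smul_eq G w₀ w
  choose β hβ using hβex
  -- the common middle type
  set T := {b : G // a • b • w₀ = b • w₀} with hT
  -- first equivalence : fixed points × stabilizer ≃ T
  have e1 : Nat.card ({w : W // a • w = w} × (MulAction.stabilizer G w₀)) = Nat.card T := by
    refine le_antisymm ?_ ?_
    · refine Nat.card_le_card_of_injective
        (fun p => (⟨β p.1.1 * p.2.1, by
          rw [mul_smul, mem_stabilizer_iff.mp p.2.2, hβ, p.1.2]⟩ : T)) ?_
      rintro ⟨⟨w, hw⟩, ⟨s, hs⟩⟩ ⟨⟨w', hw'⟩, ⟨s', hs'⟩⟩ hpq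
      have hval : β w * s = β w' * s' := congrArg Subtype.val hpq
      have hww' : w = w' := by
        have := congrArg (· • w₀) hval
        simpa [mul_smul, mem_stabilizer_iff.mp hs, mem_stabilizer_iff.mp hs', hβ] using this
      subst hww'
      have hss' : s = s' := by exact mul_left_cancel hval
      simp [hss']
    · refine Nat.card_le_card_of_injective
        (fun b => ((⟨b.1 • w₀, b.2⟩ : {w : W // a • w = w}),
          (⟨(β (b.1 • w₀))⁻¹ * b.1, by
            rw [mem_stabilizer_iff, mul_smul, inv_smul_eq_iff, hβ]⟩ : MulAction.stabilizer G w₀))) ?_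
      rintro ⟨b, hb⟩ ⟨b', hb'⟩ hpq
      have h1 : b • w₀ = b' • w₀ := congrArg (fun p => (Prod.fst p).1 : _ → W) hpq
      have h2 : (β (b • w₀))⁻¹ * b = (β (b' • w₀))⁻¹ * b' := congrArg (fun p => (Prod.snd p).1 : _ → G) hpq
      rw [h1] at h2
      exact Subtype.ext (mul_left_cancel h2)
  -- second equivalence : class elements × centralizer ≃ T
  have hconj : ∀ s : {x : G // x ∈ MulAction.stabilizer G w₀ ∧ ConjClasses.mk x = ConjClasses.mk a},
      ∃ c : G, c * s.1 * c⁻¹ = a := fun s => isConj_iff.mp (ConjClasses.mk_eq_mk_iff_isConj.mp s.2.2)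
  choose γ hγ using hconj
  have hγ' : ∀ s, (γ s)⁻¹ * a * γ s = s.1 := by
    intro s
    conv_lhs => rw [← hγ s]
    group
  have e2 : Nat.card ({x : G // x ∈ MulAction.stabilizer G w₀ ∧ ConjClasses.mk x = ConjClasses.mk a} ×
      {z : G // a * z = z * a}) = Nat.card T := by
    refine le_antisymm ?_ ?_
    · refine Nat.card_le_card_of_injective (fun p => (⟨p.2.1 * γ p.1, by
        have hmul : a * (p.2.1 * γ p.1) = (p.2.1 * γ p.1) * p.1.1 := by
          rw [← mul_assoc, p.2.2, mul_assoc, mul_assoc]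
          congr 1
          rw [← hγ' p.1]
          group
        rw [← mul_smul, hmul, mul_smul, mem_stabilizer_iff.mp p.1.2.1]⟩ : T)) ?_
      rintro ⟨s, z⟩ ⟨s', z'⟩ hpq
      have hval : z.1 * γ s = z'.1 * γ s' := congrArg Subtype.val hpq
      have hs : s = s' := by
        have hc : ∀ (s0 : _) (z0 : {z : G // a * z = z * a}),
            (z0.1 * γ s0)⁻¹ * a * (z0.1 * γ s0) = s0.1 := by
          intro s0 z0
          have hz0 : z0.1⁻¹ * a * z0.1 = a := by
            rw [mul_assoc, z0.2]
            group
          calc (z0.1 * γ s0)⁻¹ * a * (z0.1 * γ s0)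
              = (γ s0)⁻¹ * (z0.1⁻¹ * a * z0.1) * γ s0 := by group
            _ = (γ s0)⁻¹ * a * γ s0 := by rw [hz0]
            _ = s0.1 := hγ' s0
        have h1 := hc s z
        have h2 := hc s' z'
        rw [← hval] at h2
        exact Subtype.ext (h1.symm.trans h2)
      subst hs
      have : z = z' := Subtype.ext (mul_right_cancel hval)
      simp [this]
    · refine Nat.card_le_card_of_injective (fun b =>
        ((⟨b.1⁻¹ * a * b.1, ⟨by
            rw [mem_stabilizer_iff, mul_smul, mul_smul, b.2, inv_smul_smul], by
            exact ConjClasses.mk_eq_mk_iff_isConj.mpr (isConj_iff.mpr ⟨b.1, by group⟩)⟩⟩ :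
          {x : G // x ∈ MulAction.stabilizer G w₀ ∧ ConjClasses.mk x = ConjClasses.mk a}),
          (⟨b.1 * (γ ⟨b.1⁻¹ * a * b.1, ⟨by
            rw [mem_stabilizer_iff, mul_smul, mul_smul, b.2, inv_smul_smul], by
            exact ConjClasses.mk_eq_mk_iff_isConj.mpr (isConj_iff.mpr ⟨b.1, by group⟩)⟩⟩)⁻¹, by
            set s : {x : G // x ∈ MulAction.stabilizer G w₀ ∧ ConjClasses.mk x = ConjClasses.mk a} :=
              ⟨b.1⁻¹ * a * b.1, _⟩
            have h2 : (γ s)⁻¹ * a * γ s = b.1⁻¹ * a * b.1 := hγ' s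
            have h3 : a * (b.1 * (γ s)⁻¹) = b.1 * (b.1⁻¹ * a * b.1) * (γ s)⁻¹ := by group
            rw [h3, ← h2]
            group⟩ : {z : G // a * z = z * a}))) ?_
      intro b b' hpq
      have h1 := congrArg (fun p => (Prod.fst p)) hpq
      have h2 := congrArg (fun p => (Prod.snd p).1) hpq
      simp only at h1 h2
      rw [h1] at h2
      exact Subtype.ext (mul_right_cancel h2)
  rw [← Nat.card_prod, e1, ← e2, Nat.card_prod]

private lemma card_subgroup_eq_sum {G : Type*} [Group G] [Finite G]
    [Fintype (ConjClasses G)] (K : Subgroup G) :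
    Nat.card K = ∑ c : ConjClasses G, Nat.card {x : G // x ∈ K ∧ ConjClasses.mk x = c} := by
  classical
  have e : (Σ c : ConjClasses G, {x : G // x ∈ K ∧ ConjClasses.mk x = c}) ≃ K := by
    refine (Equiv.sigmaCongrRight fun c => ?_).trans
      (Equiv.sigmaFiberEquiv fun x : K => ConjClasses.mk (x : G))
    exact (Equiv.subtypeSubtypeEquivSubtypeInter (fun x : G => x ∈ K)
      (fun x => ConjClasses.mk x = c)).symm
  rw [← Nat.card_congr e]
  haveI : ∀ c : ConjClasses G, Fintype {x : G // x ∈ K ∧ ConjClasses.mk x = c} :=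
    fun c => Fintype.ofFinite _
  rw [Nat.card_eq_fintype_card, Fintype.card_sigma]
  exact Finset.sum_congr rfl fun c _ => (Nat.card_eq_fintype_card).symm



/-- If a finite group `G` acts transitively on a finite set `X` and some `g ∈ G`
acts with cycle type `(1,2,…,2)` (a unique fixed point, all other cycles of
length two), then every subgroup of `G` almost conjugate to a point stabilizer
is conjugate to it. -/
theorem conjugate_of_almostConjugate_of_cycleType (G X : Type*) [Group G] [Finite G]
    [MulAction G X] [Finite X] [MulAction.IsPretransitive G X]
    (x₀ : X) (g : G)
    (hsq : ∀ x : X, g • g • x = x) (hfix : ∃! x : X, g • x = x)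
    (H' : Subgroup G)
    (hac : ∀ c : ConjClasses G,
      Nat.card {x : G // x ∈ MulAction.stabilizer G x₀ ∧ ConjClasses.mk x = c} =
        Nat.card {x : G // x ∈ H' ∧ ConjClasses.mk x = c}) :
    ∃ k : G, H' = (MulAction.stabilizer G x₀).map (MulAut.conj k).toMonoidHom := by
  classical
  obtain ⟨x₁, hx₁, hx₁u⟩ := hfix
  haveI : Fintype (ConjClasses G) := Fintype.ofFinite _
  -- cardinalities of the two subgroups agree
  have hcard : Nat.card (MulAction.stabilizer G x₀) = Nat.card H' := by
    rw [card_subgroup_eq_sum (MulAction.stabilizer G x₀), card_subgroup_eq_sum H']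
    exact Finset.sum_congr rfl fun c _ => hac c
  -- fixed point counts agree on X and on G ⧸ H'
  have hfixeq : ∀ a : G,
      Nat.card {x : X // a • x = x} = Nat.card {y : G ⧸ H' // a • y = y} := by
    intro a
    have h1 := card_fix_mul (G := G) (W := X) x₀ a
    have h2 := card_fix_mul (G := G) (W := G ⧸ H') ((1 : G) : G ⧸ H') a
    rw [MulAction.stabilizer_quotient H'] at h2
    rw [← hac (ConjClasses.mk a)] at h2
    rw [← hcard] at h2
    haveI : Nonempty (MulAction.stabilizer G x₀) := ⟨1⟩
    exact Nat.eq_of_mul_eq_mul_right Nat.card_pos (h1.trans h2.symm)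
  -- g² acts trivially on both sides
  have hg2X : ∀ x : X, (g * g) • x = x := fun x => by rw [mul_smul]; exact hsq x
  have hg2Y : ∀ y : G ⧸ H', (g * g) • y = y := by
    by_contra hcon
    push_neg at hcon
    obtain ⟨y, hy⟩ := hcon
    haveI := Fintype.ofFinite (G ⧸ H')
    have h2 := hfixeq (g * g)
    have h3 : Nat.card {x : X // (g * g) • x = x} = Nat.card X :=
      Nat.card_congr (Equiv.subtypeUnivEquiv hg2X)
    have h4 := hfixeq 1
    have h5 : Nat.card {x : X // (1 : G) • x = x} = Nat.card X :=
      Nat.card_congr (Equiv.subtypeUnivEquiv fun x => one_smul G x)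
    have h6 : Nat.card {y : G ⧸ H' // (1 : G) • y = y} = Nat.card (G ⧸ H') :=
      Nat.card_congr (Equiv.subtypeUnivEquiv fun y => one_smul G y)
    have h7 : Nat.card {y : G ⧸ H' // (g * g) • y = y} < Nat.card (G ⧸ H') := by
      rw [Nat.card_eq_fintype_card, Nat.card_eq_fintype_card]
      exact Fintype.card_subtype_lt (p := fun y : G ⧸ H' => (g * g) • y = y) hy
    omega
  -- conjugates of g square to the identity on both sides
  have hsqX : ∀ (c : G) (x : X), (c * g * c⁻¹) • ((c * g * c⁻¹) • x) = x := by
    intro c x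
    rw [← mul_smul]
    have hcc : (c * g * c⁻¹) * (c * g * c⁻¹) = c * ((g * g) * c⁻¹) := by group
    rw [hcc, mul_smul, mul_smul, hg2X, smul_inv_smul]
  have hsqY : ∀ (c : G) (y : G ⧸ H'), (c * g * c⁻¹) • ((c * g * c⁻¹) • y) = y := by
    intro c y
    rw [← mul_smul]
    have hcc : (c * g * c⁻¹) * (c * g * c⁻¹) = c * ((g * g) * c⁻¹) := by group
    rw [hcc, mul_smul, mul_smul, hg2Y, smul_inv_smul]
  -- each conjugate of g has a unique fixed point on X
  have hfixconj : ∀ (c : G) (x : X), (c * g * c⁻¹) • x = x ↔ x = c • x₁ := by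
    intro c x
    rw [mul_smul, mul_smul, smul_eq_iff_eq_inv_smul]
    constructor
    · intro hfe
      exact inv_smul_eq_iff.mp (hx₁u _ hfe)
    · intro hx
      rw [hx, inv_smul_smul]
      exact hx₁
  have hcard1X : ∀ c : G, Nat.card {x : X // (c * g * c⁻¹) • x = x} = 1 := by
    intro c
    rw [Nat.card_eq_one_iff_unique]
    exact ⟨⟨fun z z' => Subtype.ext
        (((hfixconj c z.1).mp z.2).trans ((hfixconj c z'.1).mp z'.2).symm)⟩,
      ⟨⟨c • x₁, (hfixconj c _).mpr rfl⟩⟩⟩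
  -- conjugates of g lying in H' fix exactly the trivial coset on G ⧸ H'
  have hYfix : ∀ (e c : G), e = c * g * c⁻¹ → e ∈ H' →
      ∀ y : G ⧸ H', e • y = y ↔ y = ((1 : G) : G ⧸ H') := by
    intro e c hec heH'
    have hcY : Nat.card {y : G ⧸ H' // e • y = y} = 1 := by
      rw [← hfixeq e]
      have e1 : Nat.card {x : X // e • x = x} = Nat.card {x : X // (c * g * c⁻¹) • x = x} :=
        Nat.card_congr (Equiv.subtypeEquivRight fun x => by rw [hec])
      rw [e1]
      exact hcard1X c
    have h1fix : e • ((1 : G) : G ⧸ H') = ((1 : G) : G ⧸ H') := by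
      rw [MulAction.Quotient.smul_mk]
      exact (QuotientGroup.eq).mpr (by simpa using inv_mem heH')
    intro y
    constructor
    · intro hy
      haveI := (Nat.card_eq_one_iff_unique.mp hcY).1
      exact congrArg Subtype.val
        (Subsingleton.elim (⟨y, hy⟩ : {y : G ⧸ H' // e • y = y}) ⟨_, h1fix⟩)
    · rintro rfl
      exact h1fix
  -- find an element of H' conjugate to g
  obtain ⟨b, hb⟩ := MulAction.exists_smul_eq G x₁ x₀
  have hk0mem : b * g * b⁻¹ ∈ MulAction.stabilizer G x₀ :=
    MulAction.mem_stabilizer_iff.mpr ((hfixconj b x₀).mpr hb.symm)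
  haveI hnon : Nonempty {x : G // x ∈ MulAction.stabilizer G x₀ ∧
      ConjClasses.mk x = ConjClasses.mk g} :=
    ⟨⟨b * g * b⁻¹, hk0mem, ConjClasses.mk_eq_mk_iff_isConj.mpr (isConj_iff.mpr ⟨b⁻¹, by group⟩)⟩⟩
  have hpos : 0 < Nat.card {x : G // x ∈ MulAction.stabilizer G x₀ ∧
      ConjClasses.mk x = ConjClasses.mk g} := Nat.card_pos
  rw [hac (ConjClasses.mk g)] at hpos
  obtain ⟨⟨k, hkH', hkmk⟩⟩ := (Nat.card_pos_iff.mp hpos).1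
  obtain ⟨c0, hc0⟩ := isConj_iff.mp (ConjClasses.mk_eq_mk_iff_isConj.mp hkmk)
  obtain ⟨d, hkd⟩ : ∃ d : G, k = d * g * d⁻¹ := ⟨c0⁻¹, by rw [← hc0]; group⟩
  -- main claim : H' fixes the point d • x₁
  have hmain : ∀ h : G, h ∈ H' → h • (d • x₁) = d • x₁ := by
    intro h hh
    have hk2H' : h * k * h⁻¹ ∈ H' := mul_mem (mul_mem hh hkH') (inv_mem hh)
    have hk2d : h * k * h⁻¹ = (h * d) * g * (h * d)⁻¹ := by rw [hkd]; group
    have hY := (fix_comp_odd_iff (fun y : G ⧸ H' => k • y) (fun y => (h * k * h⁻¹) • y)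
        (fun y => by rw [hkd]; exact hsqY d y)
        (fun y => by rw [hk2d]; exact hsqY (h * d) y)
        ((1 : G) : G ⧸ H') ((1 : G) : G ⧸ H')
        (hYfix k d hkd hkH')
        (hYfix (h * k * h⁻¹) (h * d) hk2d hk2H')).mpr rfl
    have hX : Odd (Nat.card {x : X // k • ((h * k * h⁻¹) • x) = x}) := by
      have t1 : Nat.card {y : G ⧸ H' // k • ((h * k * h⁻¹) • y) = y} =
          Nat.card {y : G ⧸ H' // (k * (h * k * h⁻¹)) • y = y} :=
        Nat.card_congr (Equiv.subtypeEquivRight fun y => by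
          rw [mul_smul k (h * k * h⁻¹) y])
      have t2 : Nat.card {x : X // k • ((h * k * h⁻¹) • x) = x} =
          Nat.card {x : X // (k * (h * k * h⁻¹)) • x = x} :=
        Nat.card_congr (Equiv.subtypeEquivRight fun x => by
          rw [mul_smul k (h * k * h⁻¹) x])
      rw [t2, hfixeq (k * (h * k * h⁻¹)), ← t1]
      exact hY
    have hfin := (fix_comp_odd_iff (fun x : X => k • x) (fun x => (h * k * h⁻¹) • x)
        (fun x => by rw [hkd]; exact hsqX d x)
        (fun x => by rw [hk2d]; exact hsqX (h * d) x)
        (d • x₁) ((h * d) • x₁)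
        (fun x => by rw [hkd]; exact hfixconj d x)
        (fun x => by rw [hk2d]; exact hfixconj (h * d) x)).mp hX
    rw [← mul_smul]
    exact hfin.symm
  -- conclude
  have hle : H' ≤ MulAction.stabilizer G (d • x₁) :=
    fun h hh => MulAction.mem_stabilizer_iff.mpr (hmain h hh)
  obtain ⟨e, he⟩ := MulAction.exists_smul_eq G x₀ (d • x₁)
  have hstabmap : MulAction.stabilizer G (d • x₁) =
      (MulAction.stabilizer G x₀).map (MulAut.conj e).toMonoidHom := by
    rw [← he]
    exact MulAction.stabilizer_smul_eq_stabilizer_map_conj e x₀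
  have hcs : Nat.card (MulAction.stabilizer G (d • x₁)) ≤ Nat.card H' := by
    have h1 : Nat.card (MulAction.stabilizer G (d • x₁)) =
        Nat.card (MulAction.stabilizer G x₀) := by
      rw [hstabmap]
      exact (Nat.card_congr (Subgroup.equivMapOfInjective _ _
        (MulAut.conj e).injective).toEquiv).symm
    rw [h1, hcard]
  exact ⟨e, (Subgroup.eq_of_le_of_card_ge hle hcs).trans hstabmap⟩
end
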